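/- arXiv:0909.3043 — 5 statements merged into one kernel-verified Lean document; each statement's English description precedes it below -/
import Mathlib

section
/- For all r, r' > 0, one has ∫_{-1}^{1} dt / sqrt(r^2 + r'^2 - 2 r r' t) = 2 / max(r, r'). -/
theorem newton_theorem (r r' : ℝ) (hr : 0 < r) (hr' : 0 < r') :
    ∫ t in (-1:ℝ)..1, 1 / Real.sqrt (r ^ 2 + r' ^ 2 - 2 * r * r' * t)
      = 2 / max r r' := by
  set b : ℝ := 2 * r * r' with hb
  have hbpos : 0 < b := by positivity
  set c : ℝ := (r ^ 2 + r' ^ 2) / b with hc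
  have hc1 : 1 ≤ c := by
    rw [hc, le_div_iff₀ hbpos]
    nlinarith [sq_nonneg (r - r')]
  have hbc : b * c = r ^ 2 + r' ^ 2 := by rw [hc]; field_simp [hbpos.ne']
  have key : ∀ t ∈ Set.uIcc (-1:ℝ) 1,
      1 / Real.sqrt (r ^ 2 + r' ^ 2 - 2 * r * r' * t)
        = (1 / Real.sqrt b) * ((c - t) ^ (-(1/2) : ℝ)) := by
    intro t ht
    rw [Set.uIcc_of_le (by norm_num)] at ht
    have hct : 0 ≤ c - t := by linarith [ht.2]
    have : r ^ 2 + r' ^ 2 - 2 * r * r' * t = b * (c - t) := by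
      linear_combination -hbc + t * hb
    rw [this, Real.sqrt_mul hbpos.le, Real.rpow_neg hct, ← Real.sqrt_eq_rpow,
      one_div, one_div, mul_inv]
  rw [intervalIntegral.integral_congr key, intervalIntegral.integral_const_mul]
  have : (∫ t in (-1:ℝ)..1, (c - t) ^ (-(1/2) : ℝ))
      = ∫ t in (c-1)..(c+1), t ^ (-(1/2) : ℝ) := by
    have h := intervalIntegral.integral_comp_sub_left
      (a := (-1:ℝ)) (b := 1) (fun u : ℝ => u ^ (-(1/2):ℝ)) c
    simpa [sub_neg_eq_add] using h
  rw [this, integral_rpow (Or.inl (by norm_num))]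
  have h1 : Real.sqrt b * Real.sqrt (c + 1) = r + r' := by
    rw [← Real.sqrt_mul hbpos.le]
    have : b * (c + 1) = (r + r') ^ 2 := by linear_combination hbc + hb
    rw [this, Real.sqrt_sq (by linarith)]
  have h2 : Real.sqrt b * Real.sqrt (c - 1) = |r - r'| := by
    rw [← Real.sqrt_mul hbpos.le]
    have : b * (c - 1) = (r - r') ^ 2 := by linear_combination hbc - hb
    rw [this, Real.sqrt_sq_eq_abs]
  have hsb : 0 < Real.sqrt b := Real.sqrt_pos.mpr hbpos
  have e1 : (c + 1) ^ (-(1/2:ℝ) + 1) = Real.sqrt (c + 1) := by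
    norm_num [Real.sqrt_eq_rpow]
  have e2 : (c - 1) ^ (-(1/2:ℝ) + 1) = Real.sqrt (c - 1) := by
    norm_num [Real.sqrt_eq_rpow]
  rw [e1, e2]
  rw [eq_div_iff (by positivity : (max r r' : ℝ) ≠ 0)]
  have hmax : max r r' * (min r r') = r * r' := max_mul_min r r'
  have habs : |r - r'| = max r r' - min r r' := by
    rcases le_total r r' with h | h <;>
      simp [abs_of_nonpos, abs_of_nonneg, max_eq_right, max_eq_left,
        min_eq_left, min_eq_right, h, sub_nonneg.mpr h] <;> linarith
  -- goal: 1/√b * ((√(c+1) - √(c-1))/(-(1/2)+1)) * max r r' = 2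
  have hs1 : Real.sqrt (c+1) = (r + r') / Real.sqrt b := by
    rw [eq_div_iff hsb.ne', mul_comm, h1]
  have hs2 : Real.sqrt (c-1) = |r - r'| / Real.sqrt b := by
    rw [eq_div_iff hsb.ne', mul_comm, h2]
  rw [hs1, hs2, habs]
  have hb2 : Real.sqrt b ^ 2 = b := Real.sq_sqrt hbpos.le
  field_simp
  have hmm := max_add_min r r'
  have hss : Real.sqrt b * Real.sqrt b = b := Real.mul_self_sqrt hbpos.le
  linear_combination (-(max r r')) * hmm + 2*hmax - hss - hb
end

section
/- For nonnegative integers ℓ, ℓ', m, the integral ∫_{-1}^{1} P_ℓ(t) P_{ℓ'}(t) P_m(t) dt vanishes whenever m < |ℓ - ℓ'| or m > ℓ + ℓ'. -/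
open Polynomial

noncomputable def legendreP (n : ℕ) (x : ℝ) : ℝ :=
  (1 / ((2:ℝ) ^ n * n.factorial)) * iteratedDeriv n (fun y : ℝ => (y ^ 2 - 1) ^ n) x

noncomputable def legPoly (n : ℕ) : Polynomial ℝ :=
  Polynomial.C (1 / ((2:ℝ) ^ n * n.factorial)) *
    Polynomial.derivative^[n] ((Polynomial.X ^ 2 - 1) ^ n)

lemma iteratedDeriv_eval (k : ℕ) (p : Polynomial ℝ) (x : ℝ) :
    iteratedDeriv k (fun y => p.eval y) x = (Polynomial.derivative^[k] p).eval x := by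
  induction k generalizing p x with
  | zero => simp
  | succ k ih =>
    rw [iteratedDeriv_succ']
    have hd : deriv (fun y => p.eval y) = fun y => (Polynomial.derivative p).eval y := by
      funext y; simp [Polynomial.deriv]
    rw [hd, ih, Function.iterate_succ_apply]

lemma legendreP_eq (n : ℕ) (x : ℝ) : legendreP n x = (legPoly n).eval x := by
  have hfun : (fun y : ℝ => (y ^ 2 - 1) ^ n)
      = fun y => ((Polynomial.X ^ 2 - 1 : Polynomial ℝ) ^ n).eval y := by
    funext y; simp
  rw [legendreP, legPoly, hfun, iteratedDeriv_eval]
  simp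

lemma legPoly_natDegree_le (n : ℕ) : (legPoly n).natDegree ≤ n := by
  have h1 : ((Polynomial.X ^ 2 - 1 : Polynomial ℝ) ^ n).natDegree ≤ 2 * n := by
    refine (Polynomial.natDegree_pow_le).trans ?_
    have : (Polynomial.X ^ 2 - 1 : Polynomial ℝ).natDegree ≤ 2 := by
      compute_degree
    nlinarith
  have h2 : (Polynomial.derivative^[n] ((Polynomial.X ^ 2 - 1 : Polynomial ℝ) ^ n)).natDegree
      ≤ 2 * n - n := (Polynomial.natDegree_iterate_derivative _ _).trans (by omega)
  refine (Polynomial.natDegree_mul_le).trans ?_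
  simp only [Polynomial.natDegree_C, zero_add]
  omega

lemma dvd_iter (n k : ℕ) (hk : k ≤ n) :
    ((Polynomial.X ^ 2 - 1 : Polynomial ℝ)) ^ (n - k) ∣
      Polynomial.derivative^[k] ((Polynomial.X ^ 2 - 1) ^ n) := by
  induction k with
  | zero => simp
  | succ k ih =>
    obtain ⟨g, hg⟩ := ih (by omega)
    have hnk : n - k = (n - (k + 1)) + 1 := by omega
    refine ⟨Polynomial.C ((n:ℝ) - k) * Polynomial.derivative (Polynomial.X ^ 2 - 1) * g
      + (Polynomial.X ^ 2 - 1) * Polynomial.derivative g, ?_⟩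
    rw [Function.iterate_succ_apply', hg, Polynomial.derivative_mul, Polynomial.derivative_pow]
    have hcast : ((n - k : ℕ) : ℝ) = (n : ℝ) - k := by
      push_cast [Nat.cast_sub (by omega : k ≤ n)]; ring
    rw [hnk]
    simp only [Nat.add_sub_cancel, hnk ▸ hcast]
    ring_nf

lemma eval_vanish (n k : ℕ) (hk : k < n) (x : ℝ) (hx : x ^ 2 - 1 = 0) :
    (Polynomial.derivative^[k] ((Polynomial.X ^ 2 - 1 : Polynomial ℝ) ^ n)).eval x = 0 := by
  obtain ⟨g, hg⟩ := dvd_iter n k hk.le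
  rw [hg]
  simp only [Polynomial.eval_mul, Polynomial.eval_pow, Polynomial.eval_sub, Polynomial.eval_one,
    Polynomial.eval_pow, Polynomial.eval_X]
  rw [hx, zero_pow (by omega)]
  ring

lemma ibp (n : ℕ) (j : ℕ) (hj : j ≤ n) (q : Polynomial ℝ) :
    ∫ t in (-1:ℝ)..1,
        (Polynomial.derivative^[j] ((Polynomial.X ^ 2 - 1 : Polynomial ℝ) ^ n)).eval t * q.eval t
      = (-1:ℝ) ^ j * ∫ t in (-1:ℝ)..1,
          ((Polynomial.X ^ 2 - 1 : Polynomial ℝ) ^ n).eval t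
            * (Polynomial.derivative^[j] q).eval t := by
  induction j generalizing q with
  | zero => simp
  | succ j ih =>
    set p := Polynomial.derivative^[j] ((Polynomial.X ^ 2 - 1 : Polynomial ℝ) ^ n) with hp
    have h1 : p.eval 1 = 0 := eval_vanish n j (by omega) 1 (by norm_num)
    have h2 : p.eval (-1) = 0 := eval_vanish n j (by omega) (-1) (by norm_num)
    have key := intervalIntegral.integral_mul_deriv_eq_deriv_mul (a := (-1:ℝ)) (b := 1)
      (u := fun t => q.eval t) (v := fun t => p.eval t)
      (u' := fun t => (Polynomial.derivative q).eval t)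
      (v' := fun t => (Polynomial.derivative p).eval t)
      (fun x _ => q.hasDerivAt x) (fun x _ => p.hasDerivAt x)
      ((Polynomial.continuous _).intervalIntegrable _ _)
      ((Polynomial.continuous _).intervalIntegrable _ _)
    beta_reduce at key
    have step : ∫ t in (-1:ℝ)..1, (Polynomial.derivative p).eval t * q.eval t
        = - ∫ t in (-1:ℝ)..1, p.eval t * (Polynomial.derivative q).eval t := by
      have comm1 : ∫ t in (-1:ℝ)..1, (Polynomial.derivative p).eval t * q.eval t
          = ∫ t in (-1:ℝ)..1, q.eval t * (Polynomial.derivative p).eval t := by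
        simp_rw [mul_comm]
      have comm2 : ∫ t in (-1:ℝ)..1, (Polynomial.derivative q).eval t * p.eval t
          = ∫ t in (-1:ℝ)..1, p.eval t * (Polynomial.derivative q).eval t := by
        simp_rw [mul_comm]
      rw [comm1, key, h1, h2, comm2]
      ring
    rw [Function.iterate_succ_apply', step, ih (by omega) (Polynomial.derivative q)]
    rw [← Function.iterate_succ_apply, pow_succ]
    ring

lemma orth (n : ℕ) (q : Polynomial ℝ) (hq : q.natDegree < n) :
    ∫ t in (-1:ℝ)..1, legendreP n t * q.eval t = 0 := by
  simp_rw [legendreP_eq, legPoly, Polynomial.eval_mul, Polynomial.eval_C, mul_assoc]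
  rw [intervalIntegral.integral_const_mul, ibp n n le_rfl q,
    Polynomial.iterate_derivative_eq_zero hq]
  simp

lemma triple (a b c : ℕ) (hab : a + b < c) :
    ∫ t in (-1:ℝ)..1, legendreP c t * (legendreP a t * legendreP b t) = 0 := by
  have hprod : ∀ t : ℝ, legendreP a t * legendreP b t = (legPoly a * legPoly b).eval t := by
    intro t; simp [legendreP_eq]
  simp_rw [hprod]
  exact orth c _ (lt_of_le_of_lt ((Polynomial.natDegree_mul_le).trans
    (add_le_add (legPoly_natDegree_le a) (legPoly_natDegree_le b))) hab)

theorem legendre_triple_product_vanishes (ℓ ℓ' m : ℕ)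
    (h : (m : ℤ) < |(ℓ : ℤ) - (ℓ' : ℤ)| ∨ ℓ + ℓ' < m) :
    ∫ t in (-1:ℝ)..1, legendreP ℓ t * legendreP ℓ' t * legendreP m t = 0 := by
  rcases h with h | h
  · rcases lt_abs.mp h with h' | h'
    · -- ℓ' + m < ℓ
      have hlt : ℓ' + m < ℓ := by omega
      have := triple ℓ' m ℓ hlt
      calc ∫ t in (-1:ℝ)..1, legendreP ℓ t * legendreP ℓ' t * legendreP m t
          = ∫ t in (-1:ℝ)..1, legendreP ℓ t * (legendreP ℓ' t * legendreP m t) := by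
            simp_rw [mul_assoc]
        _ = 0 := this
    · -- ℓ + m < ℓ'
      have hlt : ℓ + m < ℓ' := by omega
      have := triple ℓ m ℓ' hlt
      calc ∫ t in (-1:ℝ)..1, legendreP ℓ t * legendreP ℓ' t * legendreP m t
          = ∫ t in (-1:ℝ)..1, legendreP ℓ' t * (legendreP ℓ t * legendreP m t) := by
            apply intervalIntegral.integral_congr; intro t _; ring
        _ = 0 := this
  · have := triple ℓ ℓ' m h
    calc ∫ t in (-1:ℝ)..1, legendreP ℓ t * legendreP ℓ' t * legendreP m t
        = ∫ t in (-1:ℝ)..1, legendreP m t * (legendreP ℓ t * legendreP ℓ' t) := by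
          apply intervalIntegral.integral_congr; intro t _; ring
      _ = 0 := this
end

section
/- For r, r' > 0 with r ≠ r' and t ∈ [-1,1] one has the generating expansion 1/sqrt(r^2 + r'^2 - 2 r r' t) = Σ_{m≥0} (min(r,r')^m / max(r,r')^{m+1}) P_m(t), with the series converging absolutely. -/
open Complex Finset NNReal ENNReal


open Complex Finset

noncomputable def cb (k : ℕ) : ℝ := Nat.centralBinom k / 4 ^ k

lemma cb_nonneg (k : ℕ) : 0 ≤ cb k := by
  unfold cb; positivity

lemma cb_zero : cb 0 = 1 := by simp [cb, Nat.centralBinom]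

lemma cb_succ (k : ℕ) : cb (k + 1) = cb k * ((2 * k + 1) / (2 * k + 2)) := by
  have h := Nat.succ_mul_centralBinom_succ k
  have h2 : ((k:ℝ) + 1) * (Nat.centralBinom (k+1) : ℝ) = 2 * (2 * k + 1) * Nat.centralBinom k := by
    exact_mod_cast congrArg (Nat.cast : ℕ → ℝ) h
  unfold cb
  have hk1 : ((k:ℝ) + 1) ≠ 0 := by positivity
  field_simp
  ring_nf
  ring_nf at h2
  linear_combination (2 * (4:ℝ)^k) * h2

lemma cb_le_one (k : ℕ) : cb k ≤ 1 := by
  induction k with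
  | zero => simp [cb_zero]
  | succ n ih =>
    rw [cb_succ]
    have h1 : (2 * (n:ℝ) + 1) / (2 * n + 2) ≤ 1 := by
      rw [div_le_one (by positivity)]; linarith
    calc cb n * ((2 * n + 1) / (2 * n + 2)) ≤ 1 * 1 :=
          mul_le_mul ih h1 (by positivity) (by norm_num)
      _ = 1 := by norm_num

noncomputable def Acoef (n : ℕ) : ℂ := ∏ i ∈ range n, ((1:ℂ)/2 + i)

lemma factorial_mul_cb (k : ℕ) : (k.factorial : ℂ) * (cb k : ℝ) = Acoef k := by
  induction k with
  | zero => simp [cb_zero, Acoef]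
  | succ n ih =>
    rw [Acoef, prod_range_succ, ← Acoef, ← ih]
    rw [cb_succ]
    push_cast [Nat.factorial_succ]
    have h : ((2:ℂ) * n + 2) ≠ 0 := by
      intro h
      have := congrArg Complex.re h
      simp at this
      nlinarith [this]
    field_simp
    ring

noncomputable def gfun : ℂ → ℂ := fun w => (1 - w) ^ (-(1/2) : ℂ)

lemma Acoef_succ (n : ℕ) : Acoef (n + 1) = Acoef n * ((1:ℂ)/2 + n) := prod_range_succ _ _

lemma isOpen_reLt : IsOpen {w : ℂ | w.re < 1} :=
  isOpen_lt continuous_re continuous_const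

lemma slit_of_reLt {w : ℂ} (hw : w.re < 1) : 1 - w ∈ slitPlane := by
  rw [mem_slitPlane_iff]
  left; simp [Complex.sub_re]; linarith

lemma iteratedDeriv_gfun (n : ℕ) : ∀ w : ℂ, w.re < 1 →
    iteratedDeriv n gfun w = Acoef n * (1 - w) ^ (-(1/2) - n : ℂ) := by
  induction n with
  | zero => intro w _; simp [Acoef, gfun]
  | succ n ih =>
    intro w hw
    rw [iteratedDeriv_succ]
    have heq : Set.EqOn (iteratedDeriv n gfun)
        (fun w' => Acoef n * (1 - w') ^ (-(1/2) - n : ℂ)) {w : ℂ | w.re < 1} :=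
      fun w' hw' => ih w' hw'
    have hd : deriv (iteratedDeriv n gfun) w =
        deriv (fun w' => Acoef n * (1 - w') ^ (-(1/2) - n : ℂ)) w := by
      apply Filter.EventuallyEq.deriv_eq
      exact Filter.eventuallyEq_of_mem (isOpen_reLt.mem_nhds hw) heq
    rw [hd]
    have h1 : HasDerivAt (fun w' : ℂ => 1 - w') (-1) w := by
      simpa using (hasDerivAt_id w).const_sub 1
    have h2 : HasDerivAt (fun w' : ℂ => (1 - w') ^ (-(1/2) - n : ℂ))
        ((-(1/2) - n) * (1 - w) ^ (-(1/2) - n - 1 : ℂ) * (-1)) w :=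
      h1.cpow_const (slit_of_reLt hw)
    rw [(h2.const_mul (Acoef n)).deriv]
    rw [Acoef_succ]
    have he : (-(1/2) - n - 1 : ℂ) = (-(1/2) - (n+1 : ℕ) : ℂ) := by push_cast; ring
    rw [he]
    push_cast
    ring

lemma hgR {R : ℝ≥0} (hR0 : 0 < R) (hR1 : (R:ℝ) < 1) :
    HasFPowerSeriesOnBall gfun (cauchyPowerSeries gfun 0 R) 0 R := by
  apply DifferentiableOn.hasFPowerSeriesOnBall _ hR0
  intro w hw
  simp only [Metric.mem_closedBall, dist_zero_right] at hw
  have hre : w.re < 1 :=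
    lt_of_le_of_lt (le_trans (le_trans (le_abs_self _) (Complex.abs_re_le_norm w)) hw) hR1
  exact (((hasDerivAt_id w).const_sub 1).cpow_const
    (slit_of_reLt hre)).differentiableAt.differentiableWithinAt

lemma pgR_coeff {R : ℝ≥0} (hR0 : 0 < R) (hR1 : (R:ℝ) < 1) (n : ℕ) :
    (cauchyPowerSeries gfun 0 R).coeff n = (cb n : ℂ) := by
  have h := (hgR hR0 hR1).factorial_smul (1 : ℂ) n
  have h2 : iteratedFDeriv ℂ n gfun 0 (fun _ => 1) = iteratedDeriv n gfun 0 := by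
    rw [iteratedDeriv_eq_iteratedFDeriv]
  rw [h2, iteratedDeriv_gfun n 0 (by norm_num)] at h
  simp only [sub_zero, one_cpow, mul_one] at h
  have h3 : (n.factorial : ℂ) * (cauchyPowerSeries gfun 0 R).coeff n = Acoef n := by
    rw [FormalMultilinearSeries.coeff]
    simpa [nsmul_eq_mul] using h
  have hne : (n.factorial : ℂ) ≠ 0 := by exact_mod_cast n.factorial_ne_zero
  exact mul_left_cancel₀ hne (h3.trans (factorial_mul_cb n).symm)

lemma binomial_series {z : ℂ} (hz : ‖z‖ < 1) :
    HasSum (fun k => (cb k : ℂ) * z ^ k) (gfun z) := by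
  set R : ℝ≥0 := ⟨(1 + ‖z‖)/2, by positivity⟩ with hRdef
  have hR0 : 0 < R := by
    rw [← NNReal.coe_lt_coe]
    show (0:ℝ) < (1 + ‖z‖)/2
    positivity
  have hR1 : (R:ℝ) < 1 := by
    show (1 + ‖z‖)/2 < 1
    linarith
  have hzR : ‖z‖ < (R:ℝ) := by
    show ‖z‖ < (1 + ‖z‖)/2
    linarith
  have hmem : z ∈ Metric.eball (0:ℂ) R := by
    rw [EMetric.mem_ball, edist_zero_right]
    exact_mod_cast hzR
  have h := (hgR hR0 hR1).hasSum hmem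
  simp only [zero_add] at h
  have heq : (fun n => (cauchyPowerSeries gfun 0 R) n fun _ => z)
      = fun k => (cb k : ℂ) * z ^ k := by
    funext k
    rw [FormalMultilinearSeries.apply_eq_pow_smul_coeff, pgR_coeff hR0 hR1, smul_eq_mul]
    ring
  rwa [heq] at h

noncomputable def Ffun (x : ℝ) : ℂ → ℂ := fun z => (1 - 2*(x:ℂ)*z + z^2) ^ (-(1/2) : ℂ)

lemma base_re (x : ℝ) (z : ℂ) :
    (1 - 2*(x:ℂ)*z + z^2).re = 1 - 2*x*z.re + z.re^2 - z.im^2 := by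
  simp [Complex.add_re, Complex.sub_re, Complex.mul_re, Complex.ofReal_re, Complex.ofReal_im,
    pow_two, Complex.mul_im]
  ring

lemma base_im (x : ℝ) (z : ℂ) :
    (1 - 2*(x:ℂ)*z + z^2).im = 2*z.im*(z.re - x) := by
  simp [Complex.add_im, Complex.sub_im, Complex.mul_re, Complex.mul_im, pow_two]
  ring

lemma slitF {x : ℝ} (hx1 : -1 ≤ x) (hx2 : x ≤ 1) {z : ℂ} (hz : ‖z‖ < 1) :
    (1 - 2*(x:ℂ)*z + z^2) ∈ Complex.slitPlane := by
  rw [Complex.mem_slitPlane_iff]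
  by_cases him : (1 - 2*(x:ℂ)*z + z^2).im = 0
  · left
    rw [base_re]
    rw [base_im] at him
    have hre : |z.re| < 1 := lt_of_le_of_lt (Complex.abs_re_le_norm z) hz
    have hre1 : z.re < 1 := lt_of_le_of_lt (le_abs_self _) hre
    have hre2 : -1 < z.re := neg_lt_of_neg_lt (lt_of_le_of_lt (neg_le_abs _) hre)
    rcases mul_eq_zero.1 him with h | h
    · -- z.im = 0
      have hb : z.im = 0 := by linarith [mul_eq_zero.1 him]
      rw [hb]
      rcases le_or_gt 0 z.re with ha | ha
      · nlinarith [sq_nonneg (1 - z.re), mul_nonneg (sub_nonneg.2 hx2) ha]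
      · nlinarith [sq_nonneg (1 + z.re), mul_nonneg (by linarith : (0:ℝ) ≤ 1 + x) (by linarith : (0:ℝ) ≤ -z.re)]
    · -- z.re = x
      have ha : z.re = x := by linarith
      have hn : z.re^2 + z.im^2 < 1 := by
        have h2 : z.re^2 + z.im^2 = ‖z‖^2 := by
          rw [Complex.sq_norm, Complex.normSq_apply]; ring
        nlinarith [norm_nonneg z]
      nlinarith [ha]
  · right; exact him

lemma hFR {x : ℝ} (hx1 : -1 ≤ x) (hx2 : x ≤ 1) {R : ℝ≥0} (hR0 : 0 < R) (hR1 : (R:ℝ) < 1) :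
    HasFPowerSeriesOnBall (Ffun x) (cauchyPowerSeries (Ffun x) 0 R) 0 R := by
  apply DifferentiableOn.hasFPowerSeriesOnBall _ hR0
  intro z hzz
  simp only [Metric.mem_closedBall, dist_zero_right] at hzz
  have hz : ‖z‖ < 1 := lt_of_le_of_lt hzz hR1
  have hbase : HasDerivAt (fun z' : ℂ => 1 - 2*(x:ℂ)*z' + z'^2) (-(2*(x:ℂ)) + 2*z) z := by
    have h1 : HasDerivAt (fun z' : ℂ => 1 - 2*(x:ℂ)*z') (-(2*(x:ℂ))) z := by
      simpa using ((hasDerivAt_id z).const_mul (2*(x:ℂ))).const_sub 1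
    exact (h1.add ((hasDerivAt_pow 2 z))).congr_deriv (by norm_num)
  exact ((hbase.cpow_const (slitF hx1 hx2 hz))).differentiableAt.differentiableWithinAt

lemma spos {x u : ℝ} (hx1 : -1 ≤ x) (hx2 : x ≤ 1) (hu : |u| < 1) :
    0 < 1 - 2*x*u + u^2 := by
  have h1 : x*u ≤ |u| := by
    calc x*u ≤ |x*u| := le_abs_self _
      _ = |x| * |u| := abs_mul x u
      _ ≤ 1 * |u| := by
          apply mul_le_mul_of_nonneg_right _ (abs_nonneg u)
          rw [abs_le]; exact ⟨hx1, hx2⟩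
      _ = |u| := one_mul _
  nlinarith [_root_.sq_abs u, sq_nonneg (1 - |u|)]

lemma Ffun_real {x u : ℝ} (hx1 : -1 ≤ x) (hx2 : x ≤ 1) (hu : |u| < 1) :
    Ffun x u = ((1 / Real.sqrt (1 - 2*x*u + u^2) : ℝ) : ℂ) := by
  have hs := spos hx1 hx2 hu
  have hbase : (1 - 2*(x:ℂ)*(u:ℂ) + (u:ℂ)^2) = ((1 - 2*x*u + u^2 : ℝ) : ℂ) := by
    push_cast; ring
  rw [Ffun, hbase]
  have he : (-(1/2) : ℂ) = ((-(1/2) : ℝ) : ℂ) := by norm_num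
  rw [he, ← Complex.ofReal_cpow hs.le]
  congr 1
  rw [Real.rpow_neg hs.le, ← Real.sqrt_eq_rpow, one_div]

noncomputable def aR (x : ℝ) (m : ℕ) : ℝ :=
  ∑ ij ∈ antidiagonal m,
    (if ij.2 ≤ ij.1 then cb ij.1 * (ij.1.choose ij.2) * (2*x)^(ij.1 - ij.2) * (-1)^ij.2 else 0)

noncomputable def Tc (x : ℝ) (z : ℂ) : ℕ × ℕ → ℂ := fun kj =>
  if kj.2 ≤ kj.1 then
    (cb kj.1 : ℂ) * (kj.1.choose kj.2 : ℂ) * (2*(x:ℂ))^(kj.1 - kj.2) * (-1)^kj.2 * z^(kj.1 + kj.2)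
  else 0

noncomputable def Bf : ℕ × ℕ → ℝ := fun kj =>
  if kj.2 ≤ kj.1 then
    cb kj.1 * (kj.1.choose kj.2) * 2^(kj.1 - kj.2) * (2/5 : ℝ)^(kj.1 + kj.2)
  else 0

lemma Bf_nonneg (kj : ℕ × ℕ) : 0 ≤ Bf kj := by
  unfold Bf; split
  · have := cb_nonneg kj.1; positivity
  · exact le_refl 0

lemma norm_Tc_le {x : ℝ} (hx1 : -1 ≤ x) (hx2 : x ≤ 1) {z : ℂ} (hz : ‖z‖ ≤ 2/5) (kj : ℕ × ℕ) :
    ‖Tc x z kj‖ ≤ Bf kj := by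
  unfold Tc Bf
  split
  · have h1 : ‖(cb kj.1 : ℂ)‖ = cb kj.1 := by
      rw [Complex.norm_real, Real.norm_eq_abs, _root_.abs_of_nonneg (cb_nonneg _)]
    have h2 : ‖(kj.1.choose kj.2 : ℂ)‖ = (kj.1.choose kj.2 : ℝ) := by
      simp
    have h3 : ‖(2:ℂ)‖ * ‖(x:ℂ)‖ ≤ 2 := by
      simp only [Complex.norm_real, Real.norm_eq_abs]
      norm_num
      nlinarith [abs_le.2 ⟨hx1, hx2⟩, abs_nonneg x]
    have h4 : ‖(-1 : ℂ)‖ = 1 := by simp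
    simp only [norm_mul, norm_pow, h1, h2, h4, one_pow, mul_one]
    have hc := cb_nonneg kj.1
    have hch : (0:ℝ) ≤ (kj.1.choose kj.2 : ℝ) := by positivity
    gcongr <;> first
      | exact norm_nonneg _
      | positivity
      | exact h3
      | exact hz
  · simp

lemma row_Bf (k : ℕ) : HasSum (fun j => Bf (k, j)) (cb k * (24/25 : ℝ)^k) := by
  have hsupp : ∀ j ∉ range (k+1), Bf (k, j) = 0 := by
    intro j hj
    rw [mem_range] at hj
    unfold Bf
    rw [if_neg]
    simpa using by omega
  have h := hasSum_sum_of_ne_finset_zero (L := SummationFilter.unconditional _) hsupp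
  convert h using 1
  have : ∑ j ∈ range (k+1), Bf (k, j)
      = ∑ j ∈ range (k+1), cb k * ((2/5:ℝ)^j * 2^(k-j) * (k.choose j)) * (2/5)^k := by
    apply Finset.sum_congr rfl
    intro j hj
    rw [mem_range] at hj
    unfold Bf
    rw [if_pos (by omega)]
    rw [pow_add]
    ring
  rw [this, ← Finset.sum_mul, ← Finset.mul_sum, ← add_pow (2/5 : ℝ) 2 k]
  rw [show (2/5 + 2 : ℝ) = 12/5 by norm_num, mul_assoc, ← mul_pow]
  norm_num

lemma Bf_summable : Summable Bf := by
  rw [summable_prod_of_nonneg Bf_nonneg]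
  constructor
  · intro k
    exact (row_Bf k).summable
  · apply Summable.of_nonneg_of_le (fun k => ?_) (fun k => ?_)
      (summable_geometric_of_lt_one (by norm_num : (0:ℝ) ≤ 24/25) (by norm_num))
    · rw [(row_Bf k).tsum_eq]
      have := cb_nonneg k
      positivity
    · rw [(row_Bf k).tsum_eq]
      calc cb k * (24/25:ℝ)^k ≤ 1 * (24/25:ℝ)^k := by
            apply mul_le_mul_of_nonneg_right (cb_le_one k) (by positivity)
        _ = (24/25:ℝ)^k := one_mul _

lemma Tc_summable {x : ℝ} (hx1 : -1 ≤ x) (hx2 : x ≤ 1) {z : ℂ} (hz : ‖z‖ ≤ 2/5) :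
    Summable (Tc x z) :=
  Summable.of_norm (Summable.of_nonneg_of_le (fun _ => norm_nonneg _)
    (norm_Tc_le hx1 hx2 hz) Bf_summable)

lemma row_Tc {x : ℝ} (z : ℂ) (k : ℕ) :
    HasSum (fun j => Tc x z (k, j)) ((cb k : ℂ) * (2*(x:ℂ)*z - z^2)^k) := by
  have hsupp : ∀ j ∉ range (k+1), Tc x z (k, j) = 0 := by
    intro j hj
    rw [mem_range] at hj
    unfold Tc
    rw [if_neg]
    simpa using by omega
  have h := hasSum_sum_of_ne_finset_zero (L := SummationFilter.unconditional _) hsupp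
  convert h using 1
  rw [show (2*(x:ℂ)*z - z^2) = (-(z^2) + 2*(x:ℂ)*z) by ring, add_pow, Finset.mul_sum]
  apply Finset.sum_congr rfl
  intro j hj
  rw [mem_range] at hj
  unfold Tc
  rw [if_pos (by simpa using by omega)]
  have h1 : (-(z^2))^j = (-1:ℂ)^j * z^(2*j) := by rw [neg_pow, ← pow_mul]
  have h2 : (2*(x:ℂ)*z)^(k-j) = (2*(x:ℂ))^(k-j) * z^(k-j) := mul_pow _ _ _
  rw [h1, h2]
  have hzz : z^(2*j) * z^(k-j) = z^(k+j) := by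
    rw [← pow_add]
    congr 1
    omega
  rw [← hzz]
  ring

lemma hasSum_Tc {x : ℝ} (hx1 : -1 ≤ x) (hx2 : x ≤ 1) {z : ℂ} (hz : ‖z‖ ≤ 2/5) :
    HasSum (Tc x z) (Ffun x z) := by
  have hS := (Tc_summable hx1 hx2 hz).hasSum
  have hrows := fun k => row_Tc (x := x) z k
  have hfib : HasSum (fun k => (cb k : ℂ) * (2*(x:ℂ)*z - z^2)^k) (∑' p, Tc x z p) :=
    HasSum.prod_fiberwise hS hrows
  have hw : ‖2*(x:ℂ)*z - z^2‖ < 1 := by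
    have h3 : ‖(2*(x:ℂ))‖ ≤ 2 := by
      rw [show (2*(x:ℂ)) = ((2*x : ℝ) : ℂ) by push_cast; ring, Complex.norm_real,
        Real.norm_eq_abs]
      rw [abs_mul]
      norm_num
      nlinarith [abs_le.2 ⟨hx1, hx2⟩, abs_nonneg x]
    calc ‖2*(x:ℂ)*z - z^2‖ ≤ ‖2*(x:ℂ)*z‖ + ‖z^2‖ := norm_sub_le _ _
      _ = ‖2*(x:ℂ)‖ * ‖z‖ + ‖z‖^2 := by rw [norm_mul, norm_pow]
      _ ≤ 2 * (2/5) + (2/5)^2 := by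
          apply add_le_add
          · exact mul_le_mul h3 hz (norm_nonneg _) (by norm_num)
          · exact pow_le_pow_left₀ (norm_nonneg _) hz 2
      _ < 1 := by norm_num
  have hbin := binomial_series hw
  have hgF : gfun (2*(x:ℂ)*z - z^2) = Ffun x z := by
    unfold gfun Ffun
    congr 1
    ring
  rw [hgF] at hbin
  have : (∑' p, Tc x z p) = Ffun x z := hfib.unique hbin
  rwa [this] at hS

lemma antidiag_sum_Tc {x : ℝ} (z : ℂ) (m : ℕ) :
    ∑ p ∈ antidiagonal m, Tc x z p = (aR x m : ℂ) * z^m := by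
  rw [aR]
  push_cast
  rw [Finset.sum_mul]
  apply Finset.sum_congr rfl
  intro p hp
  rw [Finset.HasAntidiagonal.mem_antidiagonal] at hp
  unfold Tc
  split
  · rw [hp]
    push_cast
    ring
  · simp

lemma hasSum_aR {x : ℝ} (hx1 : -1 ≤ x) (hx2 : x ≤ 1) {z : ℂ} (hz : ‖z‖ ≤ 2/5) :
    HasSum (fun m => (aR x m : ℂ) * z^m) (Ffun x z) := by
  have hT := hasSum_Tc hx1 hx2 hz
  have he : HasSum (Tc x z ∘ (Finset.HasAntidiagonal.sigmaAntidiagonalEquivProd (A := ℕ))) (Ffun x z) :=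
    (Equiv.hasSum_iff _).2 hT
  apply HasSum.sigma he
  intro m
  have hf := hasSum_fintype (fun c : {p : ℕ × ℕ // p ∈ antidiagonal m} =>
    Tc x z (c : ℕ × ℕ))
  convert hf using 1
  · rfl
  rw [← antidiag_sum_Tc (x := x) z m, ← Finset.sum_coe_sort]

lemma abs_aR_le {x : ℝ} (hx1 : -1 ≤ x) (hx2 : x ≤ 1) (m : ℕ) :
    |aR x m| * (2/5:ℝ)^m ≤ ∑ p ∈ antidiagonal m, ‖Tc x ((2/5 : ℝ) : ℂ) p‖ := by
  have h1 : (aR x m : ℂ) * ((2/5:ℝ):ℂ)^m = ∑ p ∈ antidiagonal m, Tc x ((2/5:ℝ):ℂ) p :=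
    (antidiag_sum_Tc _ m).symm
  have h2 : |aR x m| * (2/5:ℝ)^m = ‖(aR x m : ℂ) * ((2/5:ℝ):ℂ)^m‖ := by
    rw [norm_mul, norm_pow, Complex.norm_real, Complex.norm_real, Real.norm_eq_abs,
      Real.norm_eq_abs]
    rw [show |(2/5 : ℝ)| = 2/5 from _root_.abs_of_nonneg (by norm_num)]
  rw [h2, h1]
  exact norm_sum_le _ _

lemma summable_rowsum_norm_Tc {x : ℝ} (hx1 : -1 ≤ x) (hx2 : x ≤ 1) :
    Summable (fun m => ∑ p ∈ antidiagonal m, ‖Tc x ((2/5 : ℝ) : ℂ) p‖) := by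
  have hz : ‖((2/5:ℝ):ℂ)‖ ≤ 2/5 := by
    rw [Complex.norm_real, Real.norm_eq_abs, _root_.abs_of_nonneg (by norm_num : (0:ℝ) ≤ 2/5)]
  have hT : Summable (fun p => ‖Tc x ((2/5:ℝ):ℂ) p‖) :=
    Summable.of_nonneg_of_le (fun _ => norm_nonneg _) (norm_Tc_le hx1 hx2 hz) Bf_summable
  have hS := hT.hasSum
  have he : HasSum ((fun p => ‖Tc x ((2/5:ℝ):ℂ) p‖) ∘
      (Finset.HasAntidiagonal.sigmaAntidiagonalEquivProd (A := ℕ))) (∑' p, ‖Tc x ((2/5:ℝ):ℂ) p‖) :=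
    (Equiv.hasSum_iff _).2 hS
  have h2 : HasSum (fun m => ∑ p ∈ antidiagonal m, ‖Tc x ((2/5 : ℝ) : ℂ) p‖)
      (∑' p, ‖Tc x ((2/5:ℝ):ℂ) p‖) := by
    apply HasSum.sigma he
    intro m
    have hf := hasSum_fintype (fun c : {p : ℕ × ℕ // p ∈ antidiagonal m} =>
      ‖Tc x ((2/5:ℝ):ℂ) (c : ℕ × ℕ)‖)
    convert hf using 1
    · rfl
    rw [← Finset.sum_coe_sort]
  exact h2.summable

noncomputable def pa (x : ℝ) : FormalMultilinearSeries ℂ ℂ ℂ := fun m =>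
  ContinuousMultilinearMap.mkPiRing ℂ (Fin m) ((aR x m : ℂ))

lemma pa_coeff (x : ℝ) (m : ℕ) : (pa x).coeff m = (aR x m : ℂ) := by
  simp [FormalMultilinearSeries.coeff, pa, ContinuousMultilinearMap.mkPiRing_apply]

lemma pa_norm (x : ℝ) (m : ℕ) : ‖pa x m‖ = |aR x m| := by
  rw [pa, ContinuousMultilinearMap.norm_mkPiRing, Complex.norm_real, Real.norm_eq_abs]

lemma hpa {x : ℝ} (hx1 : -1 ≤ x) (hx2 : x ≤ 1) :
    HasFPowerSeriesOnBall (Ffun x) (pa x) 0 ((2/5 : ℝ≥0) : ℝ≥0∞) := by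
  constructor
  · apply FormalMultilinearSeries.le_radius_of_summable
    have hco : ((2/5 : ℝ≥0) : ℝ) = (2/5 : ℝ) := by norm_num
    rw [hco]
    apply Summable.of_nonneg_of_le (fun m => ?_) (fun m => ?_) (summable_rowsum_norm_Tc hx1 hx2)
    · positivity
    · rw [pa_norm]
      exact abs_aR_le hx1 hx2 m
  · norm_num
  · intro y hy
    rw [EMetric.mem_ball, edist_zero_right] at hy
    have hy' : ‖y‖ ≤ 2/5 := by
      have : (‖y‖₊ : ℝ) < ((2/5 : ℝ≥0) : ℝ) := by exact_mod_cast hy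
      rw [coe_nnnorm] at this
      calc ‖y‖ ≤ ((2/5 : ℝ≥0) : ℝ) := le_of_lt this
        _ = 2/5 := by norm_num
    have h := hasSum_aR hx1 hx2 hy'
    rw [zero_add]
    convert h using 2 with m
    · rfl
    rw [FormalMultilinearSeries.apply_eq_pow_smul_coeff, pa_coeff, smul_eq_mul]
    ring

lemma pF_coeff {x : ℝ} (hx1 : -1 ≤ x) (hx2 : x ≤ 1) {R : ℝ≥0} (hR0 : 0 < R)
    (hR1 : (R:ℝ) < 1) (m : ℕ) :
    (cauchyPowerSeries (Ffun x) 0 R).coeff m = (aR x m : ℂ) := by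
  have h := ((hpa hx1 hx2).hasFPowerSeriesAt).eq_formalMultilinearSeries
    ((hFR hx1 hx2 hR0 hR1).hasFPowerSeriesAt)
  rw [← h, pa_coeff]

lemma hasSum_legcoef {x u : ℝ} (hx1 : -1 ≤ x) (hx2 : x ≤ 1) (hu : |u| < 1) :
    HasSum (fun m => aR x m * u^m) (1 / Real.sqrt (1 - 2*x*u + u^2)) := by
  set R : ℝ≥0 := ⟨(1 + |u|)/2, by positivity⟩ with hRdef
  have hR0 : 0 < R := by
    rw [← NNReal.coe_lt_coe]
    show (0:ℝ) < (1 + |u|)/2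
    positivity
  have hR1 : (R:ℝ) < 1 := by
    show (1 + |u|)/2 < 1
    linarith
  have huR : ‖(u:ℂ)‖ < (R:ℝ) := by
    rw [Complex.norm_real, Real.norm_eq_abs]
    show |u| < (1 + |u|)/2
    linarith
  have hmem : (u:ℂ) ∈ Metric.eball (0:ℂ) R := by
    rw [EMetric.mem_ball, edist_zero_right]
    exact_mod_cast huR
  have h := (hFR hx1 hx2 hR0 hR1).hasSum hmem
  simp only [zero_add] at h
  have heq : (fun n => (cauchyPowerSeries (Ffun x) 0 R) n fun _ => (u:ℂ))
      = fun m => (((aR x m * u^m : ℝ)) : ℂ) := by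
    funext m
    rw [FormalMultilinearSeries.apply_eq_pow_smul_coeff, pF_coeff hx1 hx2 hR0 hR1, smul_eq_mul]
    push_cast
    ring
  rw [heq, Ffun_real hx1 hx2 hu] at h
  have h2 := Complex.reCLM.hasSum h
  simp only [Complex.reCLM_apply, Complex.ofReal_re] at h2
  simpa using h2

lemma summable_abs_legcoef {x u : ℝ} (hx1 : -1 ≤ x) (hx2 : x ≤ 1) (hu : |u| < 1) :
    Summable (fun m => |aR x m * u^m|) := by
  set R : ℝ≥0 := ⟨(1 + |u|)/2, by positivity⟩ with hRdef
  have hR0 : 0 < R := by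
    rw [← NNReal.coe_lt_coe]
    show (0:ℝ) < (1 + |u|)/2
    positivity
  have hR1 : (R:ℝ) < 1 := by
    show (1 + |u|)/2 < 1
    linarith
  have hrad : ((‖u‖₊ : ℝ≥0) : ℝ≥0∞) < (cauchyPowerSeries (Ffun x) 0 R).radius := by
    apply lt_of_lt_of_le _ (hFR hx1 hx2 hR0 hR1).r_le
    rw [ENNReal.coe_lt_coe, ← NNReal.coe_lt_coe, coe_nnnorm, Real.norm_eq_abs]
    show |u| < (1 + |u|)/2
    linarith
  have hsum := (cauchyPowerSeries (Ffun x) 0 R).summable_norm_mul_pow hrad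
  apply Summable.of_nonneg_of_le (fun m => abs_nonneg _) (fun m => ?_) hsum
  have hc : ‖(cauchyPowerSeries (Ffun x) 0 R).coeff m‖
      ≤ ‖cauchyPowerSeries (Ffun x) 0 R m‖ := by
    have h := (cauchyPowerSeries (Ffun x) 0 R m).le_opNorm (fun _ => (1:ℂ))
    simp only [norm_one, Finset.prod_const_one, mul_one] at h
    exact h
  rw [pF_coeff hx1 hx2 hR0 hR1] at hc
  rw [Complex.norm_real, Real.norm_eq_abs] at hc
  calc |aR x m * u^m| = |aR x m| * |u|^m := by rw [abs_mul, _root_.abs_pow]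
    _ ≤ ‖cauchyPowerSeries (Ffun x) 0 R m‖ * |u|^m := by
        apply mul_le_mul_of_nonneg_right hc (by positivity)
    _ = ‖cauchyPowerSeries (Ffun x) 0 R m‖ * (‖u‖₊ : ℝ)^m := by
        rw [coe_nnnorm, Real.norm_eq_abs]

lemma iteratedDeriv_polyeval (n : ℕ) : ∀ (p : Polynomial ℝ) (x : ℝ),
    iteratedDeriv n (fun y => p.eval y) x = (Polynomial.derivative^[n] p).eval x := by
  induction n with
  | zero => intro p x; simp
  | succ n ih =>
    intro p x
    rw [iteratedDeriv_succ']
    have hd : (deriv fun y => p.eval y) = fun y => p.derivative.eval y := by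
      funext y
      exact Polynomial.deriv p
    rw [hd, ih p.derivative, Function.iterate_succ_apply]

lemma rodrigues_eval (m : ℕ) (x : ℝ) :
    iteratedDeriv m (fun y : ℝ => (y ^ 2 - 1) ^ m) x
    = ∑ i ∈ range (m+1),
        ((-1:ℝ))^(m-i) * (m.choose i) * ((2*i).descFactorial m) * x^(2*i - m) := by
  have hfn : (fun y : ℝ => (y ^ 2 - 1) ^ m)
      = fun y => ((Polynomial.X^2 - 1 : Polynomial ℝ)^m).eval y := by
    funext y; simp
  rw [hfn, iteratedDeriv_polyeval]
  have hexp : ((Polynomial.X^2 - 1 : Polynomial ℝ))^m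
      = ∑ i ∈ range (m+1),
          (((-1:ℝ))^(m-i) * (m.choose i)) • (Polynomial.X^(2*i) : Polynomial ℝ) := by
    rw [sub_eq_add_neg, add_pow]
    apply Finset.sum_congr rfl
    intro i hi
    rw [← pow_mul, Polynomial.smul_eq_C_mul, map_mul, map_pow, map_neg, map_one,
      Polynomial.C_eq_natCast]
    ring
  rw [hexp, Polynomial.iterate_derivative_sum]
  rw [Polynomial.eval_finset_sum]
  apply Finset.sum_congr rfl
  intro i hi
  rw [Polynomial.iterate_derivative_smul, Polynomial.iterate_derivative_X_pow_eq_smul]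
  simp only [Polynomial.eval_smul, smul_eq_mul, Polynomial.eval_pow, Polynomial.eval_X,
    Polynomial.eval_natCast, nsmul_eq_mul]
  push_cast
  ring

lemma coeff_id (m i : ℕ) (hi : i < m + 1) (x : ℝ) :
    (1 / ((2:ℝ)^m * m.factorial)) *
      (((-1:ℝ))^(m-i) * (m.choose i) * ((2*i).descFactorial m) * x^(2*i - m))
    = if m - i ≤ i then cb i * (i.choose (m-i)) * (2*x)^(i-(m-i)) * (-1)^(m-i) else 0 := by
  rw [Nat.lt_succ_iff] at hi
  by_cases hcase : m - i ≤ i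
  · rw [if_pos hcase]
    have h2i : m ≤ 2*i := by omega
    set j := m - i with hj
    have hji : j ≤ i := hcase
    have hmij : m = i + j := by omega
    have hl : i - j = 2*i - m := by omega
    have h1 : (m.choose i : ℝ) = m.factorial / (i.factorial * j.factorial) := by
      rw [Nat.cast_choose ℝ hi, hj]
    have h2 : ((2*i).descFactorial m : ℝ) = m.factorial * ((2*i).choose m) := by
      rw [Nat.descFactorial_eq_factorial_mul_choose]
      push_cast
      ring
    have h3 : ((2*i).choose m : ℝ) = (2*i).factorial / (m.factorial * (2*i - m).factorial) := by
      rw [Nat.cast_choose ℝ h2i]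
    have h4 : (i.choose j : ℝ) = i.factorial / (j.factorial * (i - j).factorial) := by
      rw [Nat.cast_choose ℝ hji]
    have h5 : cb i = (2*i).factorial / ((i.factorial * i.factorial) * 4^i) := by
      rw [cb, Nat.centralBinom_eq_two_mul_choose, Nat.cast_choose ℝ (by omega : i ≤ 2*i)]
      rw [show 2*i - i = i by omega]
      field_simp
    have hexp : (2*x)^(i - j) = 2^(2*i-m) * x^(2*i-m) := by
      rw [hl, mul_pow]
    have h4pow : (4:ℝ)^i = 2^m * 2^(2*i - m) := by
      rw [show (4:ℝ) = 2^2 by norm_num, ← pow_mul, ← pow_add]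
      congr 1
      omega
    rw [h1, h2, h3, h4, h5, hexp, h4pow]
    have hf1 : (m.factorial : ℝ) ≠ 0 := by positivity
    have hf2 : (i.factorial : ℝ) ≠ 0 := by positivity
    have hf3 : (j.factorial : ℝ) ≠ 0 := by positivity
    have hf4 : ((2*i - m).factorial : ℝ) ≠ 0 := by positivity
    have hf5 : ((i - j).factorial : ℝ) = ((2*i - m).factorial : ℝ) := by rw [hl]
    rw [hf5]
    field_simp
  · rw [if_neg hcase]
    have : (2*i).descFactorial m = 0 := Nat.descFactorial_eq_zero_iff_lt.2 (by omega)
    rw [this]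
    push_cast
    ring

lemma legendreP_eq_aR (m : ℕ) (x : ℝ) : legendreP m x = aR x m := by
  rw [legendreP, rodrigues_eval, Finset.mul_sum, aR,
    Finset.Nat.sum_antidiagonal_eq_sum_range_succ_mk]
  apply Finset.sum_congr rfl
  intro i hi
  rw [mem_range] at hi
  exact coeff_id m i hi x

theorem legendre_generating_expansion (r r' : ℝ) (hr : 0 < r) (hr' : 0 < r')
    (hne : r ≠ r') (t : ℝ) (ht : t ∈ Set.Icc (-1:ℝ) 1) :
    Summable (fun m : ℕ => |min r r' ^ m / max r r' ^ (m + 1) * legendreP m t|) ∧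
    HasSum (fun m : ℕ => min r r' ^ m / max r r' ^ (m + 1) * legendreP m t)
      (1 / Real.sqrt (r ^ 2 + r' ^ 2 - 2 * r * r' * t)) := by
  obtain ⟨ht1, ht2⟩ := ht
  set M := max r r' with hM
  set c := min r r' with hc
  have hM0 : 0 < M := lt_max_iff.2 (Or.inl hr)
  have hcM : c < M := min_lt_max.2 hne
  have hc0 : 0 < c := lt_min hr hr'
  set u := c / M with hu
  have hu0 : 0 < u := div_pos hc0 hM0
  have hu1 : u < 1 := (div_lt_one hM0).2 hcM
  have huabs : |u| < 1 := by rw [abs_of_pos hu0]; exact hu1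
  have h1 : c * M = r * r' ∧ c^2 + M^2 = r^2 + r'^2 := by
    rcases le_total r r' with h | h
    · constructor <;> simp [hc, hM, min_eq_left h, max_eq_right h] <;> ring
    · constructor <;> simp [hc, hM, min_eq_right h, max_eq_left h] <;> ring
  have hs : 0 < 1 - 2*t*u + u^2 := spos ht1 ht2 huabs
  have hkey : r^2 + r'^2 - 2*r*r'*t = M^2 * (1 - 2*t*u + u^2) := by
    have h2 : M^2 * (1 - 2*t*u + u^2) = M^2 + c^2 - 2*t*(c*M) := by
      rw [hu]
      field_simp
      ring
    rw [h2, h1.1, ← h1.2]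
    ring
  have hsqrt : Real.sqrt (r^2 + r'^2 - 2*r*r'*t) = M * Real.sqrt (1 - 2*t*u + u^2) := by
    rw [hkey, Real.sqrt_mul (by positivity) _, Real.sqrt_sq hM0.le]
  have hterm : ∀ m : ℕ, min r r' ^ m / max r r' ^ (m+1) * legendreP m t
      = (aR t m * u^m) * (1/M) := by
    intro m
    rw [legendreP_eq_aR, ← hc, ← hM, hu, div_pow, pow_succ]
    field_simp
  constructor
  · have hsum := (summable_abs_legcoef ht1 ht2 huabs).mul_right (1/M)
    apply hsum.congr
    intro m
    rw [hterm m, abs_mul (aR t m * u^m) (1/M), _root_.abs_of_pos (by positivity : (0:ℝ) < 1/M)]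
  · have hsum := (hasSum_legcoef ht1 ht2 huabs).mul_right (1/M)
    have hv : (1 / Real.sqrt (1 - 2*t*u + u^2)) * (1/M)
        = 1 / Real.sqrt (r^2 + r'^2 - 2*r*r'*t) := by
      rw [hsqrt]
      have hsq : 0 < Real.sqrt (1 - 2*t*u + u^2) := Real.sqrt_pos.2 hs
      field_simp
    rw [hv] at hsum
    have hfun : (fun m : ℕ => min r r' ^ m / max r r' ^ (m + 1) * legendreP m t)
        = fun m => (aR t m * u^m) * (1/M) := funext hterm
    rw [hfun]
    exact hsum
end

section
/- Let ε > 0. There exists a constant C_ε > 0 such that for all r, r' > 0: r^2 ∫_{-1}^{1} (1 + r^2 + r'^2 - 2 r r' t)^{-(1+ε)} dt ≤ C_ε. -/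
open Real intervalIntegral

/-- Bernoulli inequality for nonpositive exponents and nonnegative `s`. -/
lemma bern_neg {s p : ℝ} (hs : 0 ≤ s) (hp : p ≤ 0) : 1 + p * s ≤ (1 + s) ^ p := by
  have hs1 : (0:ℝ) < 1 + s := by linarith
  set q : ℝ := -p with hq
  have hq0 : 0 ≤ q := by rw [hq]; linarith
  have hps : 1 + p * s = 1 - q * s := by rw [hq]; ring
  rcases le_or_gt (1 + p * s) 0 with h | h
  · exact h.trans (Real.rpow_pos_of_pos hs1 p).le
  · have h' : 0 < 1 - q * s := by rw [hps] at h; exact h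
    have hpos : (0:ℝ) < (1 + s) ^ q := Real.rpow_pos_of_pos hs1 q
    have key : (1 - q * s) * (1 + s) ^ q ≤ 1 := by
      rcases le_or_gt q 1 with hq1 | hq1
      · have hb : (1 + s) ^ q ≤ 1 + q * s :=
          rpow_one_add_le_one_add_mul_self (by linarith) hq0 hq1
        nlinarith [mul_le_mul_of_nonneg_left hb h'.le, sq_nonneg (q * s)]
      · have hslt : s < 1 := by nlinarith
        have hb : 1 + q * (-s) ≤ (1 + -s) ^ q :=
          one_add_mul_self_le_rpow_one_add (by linarith) hq1.le
        have h1s : (0:ℝ) < 1 - s := by linarith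
        have h4 : 1 - q * s ≤ (1 - s) ^ q := by
          have heq : (1 : ℝ) + -s = 1 - s := by ring
          rw [heq] at hb; linarith
        have h2 : (1 + s) ≤ (1 - s)⁻¹ := by
          rw [inv_eq_one_div, le_div_iff₀ h1s]; nlinarith
        have h3 : (1 + s) ^ q ≤ ((1 - s) ^ q)⁻¹ := by
          rw [← Real.inv_rpow h1s.le]
          exact Real.rpow_le_rpow hs1.le h2 hq0
        have h6 : ((1 - s) ^ q)⁻¹ ≤ (1 - q * s)⁻¹ := by gcongr
        calc (1 - q * s) * (1 + s) ^ q ≤ (1 - q * s) * (1 - q * s)⁻¹ :=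
              mul_le_mul_of_nonneg_left (h3.trans h6) h'.le
          _ = 1 := mul_inv_cancel₀ h'.ne'
    have hpq : p = -q := by rw [hq]; ring
    have hrw : (1 + s) ^ p = ((1 + s) ^ q)⁻¹ := by
      rw [hpq, Real.rpow_neg hs1.le]
    rw [hrw, hps]
    have h7 := mul_le_mul_of_nonneg_right key (inv_nonneg.mpr hpos.le)
    have h8 : (1 + s) ^ q * ((1 + s) ^ q)⁻¹ = 1 := mul_inv_cancel₀ hpos.ne'
    nlinarith [h7, h8]

/-- Mean-value type inequality: for `1 ≤ x ≤ y`,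
`x^(-ε) - y^(-ε) ≤ ε * x^(-(1+ε)) * (y - x)`. -/
lemma key_ineq {ε x y : ℝ} (hε : 0 < ε) (hx : 1 ≤ x) (hxy : x ≤ y) :
    x ^ (-ε) - y ^ (-ε) ≤ ε * x ^ (-(1+ε)) * (y - x) := by
  have hx0 : (0:ℝ) < x := by linarith
  have hy0 : (0:ℝ) < y := by linarith
  set s : ℝ := (y - x) / x with hsdef
  have hs : 0 ≤ s := by
    apply div_nonneg (by linarith) hx0.le
  have h1s : 1 + s = y / x := by
    rw [hsdef, eq_div_iff hx0.ne', add_mul, div_mul_cancel₀ _ hx0.ne']; ring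
  have hb := bern_neg hs (neg_nonpos_of_nonneg hε.le)
  rw [h1s, Real.div_rpow hy0.le hx0.le] at hb
  have hxε : (0:ℝ) < x ^ (-ε) := Real.rpow_pos_of_pos hx0 _
  have hb2 : (1 + (-ε) * s) * x ^ (-ε) ≤ y ^ (-ε) := by
    have h7 := mul_le_mul_of_nonneg_right hb hxε.le
    rwa [div_mul_cancel₀ _ hxε.ne'] at h7
  have hxx : x ^ (-(1+ε)) = x ^ (-ε) * x⁻¹ := by
    rw [show -(1+ε) = -ε + (-1) by ring, Real.rpow_add hx0, Real.rpow_neg_one]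
  have heq : ε * s * x ^ (-ε) = ε * x ^ (-(1+ε)) * (y - x) := by
    rw [hxx, hsdef]; field_simp
  nlinarith [hb2, heq]

theorem uniform_bound_eps (ε : ℝ) (hε : 0 < ε) :
    ∃ C > 0, ∀ r r' : ℝ, 0 < r → 0 < r' →
      r ^ 2 * ∫ t in (-1:ℝ)..1,
          (1 + r ^ 2 + r' ^ 2 - 2 * r * r' * t) ^ (-(1 + ε)) ≤ C := by
  refine ⟨1/ε + 8, by positivity, fun r r' hr hr' => ?_⟩
  set a : ℝ := 1 + r ^ 2 + r' ^ 2 with ha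
  set b : ℝ := 2 * r * r' with hbdef
  have hb : 0 < b := by rw [hbdef]; positivity
  have hx1 : (1:ℝ) ≤ a - b := by rw [ha, hbdef]; nlinarith [sq_nonneg (r - r')]
  have hbase : ∀ t ∈ Set.uIcc (-1:ℝ) 1, 0 < a - b * t := by
    intro t ht
    rw [Set.uIcc_of_le (by norm_num : (-1:ℝ) ≤ 1)] at ht
    have h1 : b * t ≤ b := by nlinarith [ht.2]
    linarith
  -- Evaluate the integral via the antiderivative F t = (a - b t)^(-ε) / (b ε)
  have hder : ∀ t ∈ Set.uIcc (-1:ℝ) 1,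
      HasDerivAt (fun t => (a - b * t) ^ (-ε) / (b * ε)) ((a - b * t) ^ (-(1+ε))) t := by
    intro t ht
    have hpos := hbase t ht
    have h1 : HasDerivAt (fun t : ℝ => a - b * t) (-b) t := by
      simpa using ((hasDerivAt_id t).const_mul b).const_sub a
    have h2 := (h1.rpow_const (p := -ε) (Or.inl hpos.ne')).div_const (b * ε)
    refine h2.congr_deriv ?_
    rw [show -ε - 1 = -(1+ε) by ring]
    field_simp
  have hint : IntervalIntegrable (fun t => (a - b * t) ^ (-(1+ε))) MeasureTheory.volume (-1) 1 := by
    apply ContinuousOn.intervalIntegrable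
    apply ContinuousOn.rpow_const
    · exact (continuous_const.sub (continuous_const.mul continuous_id)).continuousOn
    · exact fun t ht => Or.inl (hbase t ht).ne'
  have hI : ∫ t in (-1:ℝ)..1, (a - b * t) ^ (-(1+ε))
      = (a - b) ^ (-ε) / (b * ε) - (a + b) ^ (-ε) / (b * ε) := by
    rw [integral_eq_sub_of_hasDerivAt hder hint]
    norm_num
  rw [hI]
  -- Now bound r² · ((a-b)^(-ε) - (a+b)^(-ε)) / (bε)
  have hy1 : (1:ℝ) ≤ a + b := by rw [ha, hbdef]; nlinarith [sq_nonneg (r + r')]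
  have hxy : a - b ≤ a + b := by linarith
  have hεb : 0 < b * ε := by positivity
  have hεinv : 0 < 1/ε := by positivity
  have hyp : (0:ℝ) < (a + b) ^ (-ε) := Real.rpow_pos_of_pos (by linarith) _
  rcases le_total r (2 * r') with hcase | hcase
  · -- r ≤ 2r' : crude bound, bracket ≤ 1
    have hle1 : (a - b) ^ (-ε) ≤ 1 :=
      Real.rpow_le_one_of_one_le_of_nonpos hx1 (by linarith)
    have hbr : (a - b) ^ (-ε) / (b*ε) - (a + b) ^ (-ε) / (b*ε) ≤ 1 / (b * ε) := by
      have : (a + b) ^ (-ε) / (b*ε) ≥ 0 := by positivity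
      have h2 : (a - b) ^ (-ε) / (b*ε) ≤ 1 / (b*ε) := by gcongr
      linarith
    have step : r ^ 2 * (1 / (b * ε)) ≤ 1/ε := by
      rw [mul_one_div, div_le_div_iff₀ hεb hε, hbdef]
      nlinarith [mul_nonneg (mul_nonneg hr.le hε.le) (sub_nonneg.mpr hcase)]
    have hr2 : (0:ℝ) ≤ r ^ 2 := sq_nonneg r
    nlinarith [mul_le_mul_of_nonneg_left hbr hr2]
  · -- 2r' ≤ r : use the mean-value inequality
    have hk := key_ineq hε hx1 hxy
    set X : ℝ := (a - b) ^ (-(1+ε)) with hX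
    have hX0 : 0 < X := Real.rpow_pos_of_pos (by linarith) _
    have hyx : (a + b) - (a - b) = 2 * b := by ring
    rw [hyx] at hk
    have step1 : r ^ 2 * ((a - b) ^ (-ε) / (b*ε) - (a + b) ^ (-ε) / (b*ε)) ≤ 2 * r ^ 2 * X := by
      have h1 : (a - b) ^ (-ε) / (b*ε) - (a + b) ^ (-ε) / (b*ε)
          = ((a - b) ^ (-ε) - (a + b) ^ (-ε)) / (b*ε) := by ring
      have h2 : ((a - b) ^ (-ε) - (a + b) ^ (-ε)) / (b*ε) ≤ (ε * X * (2*b)) / (b*ε) := by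
        gcongr
      have h3 : (ε * X * (2*b)) / (b*ε) = 2 * X := by field_simp
      rw [h1]
      calc r ^ 2 * (((a - b) ^ (-ε) - (a + b) ^ (-ε)) / (b*ε))
          ≤ r ^ 2 * (2 * X) := mul_le_mul_of_nonneg_left (h3 ▸ h2) (sq_nonneg r)
        _ = 2 * r ^ 2 * X := by ring
    have step2 : 2 * r ^ 2 * X ≤ 8 := by
      have hx2 : 1 + r ^ 2 / 4 ≤ a - b := by
        rw [ha, hbdef]
        nlinarith [mul_nonneg (by linarith : (0:ℝ) ≤ r/2 - r') (by linarith : (0:ℝ) ≤ 3*r/2 - r')]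
      have hXle : X ≤ (a - b)⁻¹ := by
        calc X ≤ (a - b) ^ (-1 : ℝ) :=
              Real.rpow_le_rpow_of_exponent_le hx1 (by linarith)
          _ = (a - b)⁻¹ := Real.rpow_neg_one _
      have hxpos : (0:ℝ) < a - b := by linarith
      have h9 : 2 * r ^ 2 * (a - b)⁻¹ ≤ 8 := by
        rw [show 2 * r ^ 2 * (a - b)⁻¹ = (2 * r ^ 2) / (a - b) by ring, div_le_iff₀ hxpos]
        nlinarith
      nlinarith [mul_le_mul_of_nonneg_left hXle (by positivity : (0:ℝ) ≤ 2 * r ^ 2)]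
    linarith [step1, step2]
end

section
/- For u ∈ (0,1), one has ∫_{-1}^{1} (1 - α)/(1 - u α)^2 dα = [(1+u) log((1+u)/(1-u)) - 2u] / (u^2 (1+u)), and this quantity is bounded above by 2 - log(1 - u). -/
open Real Set

lemma aux_log1 (u : ℝ) (hu : 0 ≤ u) :
    Real.log (1 + u) ≤ u - u ^ 2 / 2 + u ^ 3 / 3 := by
  set f : ℝ → ℝ := fun x => x - x ^ 2 / 2 + x ^ 3 / 3 - Real.log (1 + x) with hf
  have hder : ∀ x ∈ interior (Set.Ici (0:ℝ)),
      HasDerivAt f (1 - x + x ^ 2 - 1 / (1 + x)) x := by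
    intro x hx
    simp only [interior_Ici, Set.mem_Ioi] at hx
    have h1x : (0:ℝ) < 1 + x := by linarith
    have h1 : HasDerivAt (fun x : ℝ => 1 + x) 1 x := by
      simpa using (hasDerivAt_id x).const_add 1
    have hlog : HasDerivAt (fun x : ℝ => Real.log (1 + x)) (1 / (1 + x)) x := by
      simpa using h1.log h1x.ne'
    have hpoly : HasDerivAt (fun x : ℝ => x - x ^ 2 / 2 + x ^ 3 / 3)
        (1 - x + x ^ 2) x := by
      have := ((hasDerivAt_id x).sub (((hasDerivAt_pow 2 x)).div_const 2)).add
        (((hasDerivAt_pow 3 x)).div_const 3)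
      refine this.congr_deriv ?_
      norm_num
    exact hpoly.sub hlog
  have hmono : MonotoneOn f (Set.Ici 0) := by
    apply monotoneOn_of_deriv_nonneg (convex_Ici 0)
    · apply ContinuousOn.sub
      · fun_prop
      · apply ContinuousOn.log
        · fun_prop
        · intro x hx
          simp only [Set.mem_Ici] at hx
          linarith
    · intro x hx
      exact (hder x hx).differentiableAt.differentiableWithinAt
    · intro x hx
      rw [(hder x hx).deriv]
      simp only [interior_Ici, Set.mem_Ioi] at hx
      have h1x : (0:ℝ) < 1 + x := by linarith
      rw [sub_nonneg, div_le_iff₀ h1x]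
      nlinarith
  have h0 : f 0 = 0 := by simp [hf]
  have := hmono (Set.self_mem_Ici) (Set.mem_Ici.mpr hu) hu
  rw [h0] at this
  simp only [hf] at this
  linarith

lemma aux_log2 (u : ℝ) (hu : u ∈ Set.Ico (0:ℝ) 1) :
    0 ≤ u + u ^ 2 / 2 + (1 - u ^ 2) * Real.log (1 - u) := by
  set g : ℝ → ℝ := fun x => x + x ^ 2 / 2 + (1 - x ^ 2) * Real.log (1 - x) with hg
  have hder : ∀ x ∈ interior (Set.Ico (0:ℝ) 1),
      HasDerivAt g (-2 * x * Real.log (1 - x)) x := by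
    intro x hx
    rw [interior_Ico] at hx
    obtain ⟨hx0, hx1⟩ := hx
    have h1x : (0:ℝ) < 1 - x := by linarith
    have h1 : HasDerivAt (fun x : ℝ => 1 - x) (-1) x := by
      simpa using (hasDerivAt_id x).const_sub 1
    have hlog : HasDerivAt (fun x : ℝ => Real.log (1 - x)) (-1 / (1 - x)) x := by
      simpa using h1.log h1x.ne'
    have hq : HasDerivAt (fun x : ℝ => 1 - x ^ 2) (-(2 * x)) x := by
      simpa using (hasDerivAt_pow 2 x).const_sub 1
    have hpoly : HasDerivAt (fun x : ℝ => x + x ^ 2 / 2) (1 + x) x := by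
      have := (hasDerivAt_id x).add ((hasDerivAt_pow 2 x).div_const 2)
      refine this.congr_deriv ?_
      norm_num
    have := hpoly.add (hq.mul hlog)
    refine this.congr_deriv ?_
    field_simp
    ring
  have hmono : MonotoneOn g (Set.Ico 0 1) := by
    apply monotoneOn_of_deriv_nonneg (convex_Ico 0 1)
    · apply ContinuousOn.add
      · fun_prop
      · apply ContinuousOn.mul
        · fun_prop
        · apply ContinuousOn.log
          · fun_prop
          · intro x hx
            simp only [Set.mem_Ico] at hx
            linarith [hx.2]
    · intro x hx
      exact (hder x hx).differentiableAt.differentiableWithinAt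
    · intro x hx
      rw [(hder x hx).deriv]
      rw [interior_Ico] at hx
      obtain ⟨hx0, hx1⟩ := hx
      have hlogneg : Real.log (1 - x) ≤ 0 :=
        Real.log_nonpos (by linarith) (by linarith)
      nlinarith
  have h0 : g 0 = 0 := by simp [hg]
  have := hmono (Set.mem_Ico.mpr ⟨le_refl 0, by norm_num⟩) hu hu.1
  rw [h0] at this
  simpa [hg] using this

theorem integral_one_sub_div_sq (u : ℝ) (hu : u ∈ Set.Ioo (0:ℝ) 1) :
    (∫ α in (-1:ℝ)..1, (1 - α) / (1 - u * α) ^ 2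
        = ((1 + u) * Real.log ((1 + u) / (1 - u)) - 2 * u) / (u ^ 2 * (1 + u))) ∧
    ((1 + u) * Real.log ((1 + u) / (1 - u)) - 2 * u) / (u ^ 2 * (1 + u))
        ≤ 2 - Real.log (1 - u) := by
  obtain ⟨hu0, hu1⟩ := hu
  have h1u : (0:ℝ) < 1 - u := by linarith
  have h1u' : (0:ℝ) < 1 + u := by linarith
  have hpos : ∀ α ∈ Set.Icc (-1:ℝ) 1, (0:ℝ) < 1 - u * α := by
    intro α ⟨ha, hb⟩
    nlinarith
  constructor
  · -- the integral computation
    set F : ℝ → ℝ := fun α => -(1 / u ^ 2) * (Real.log (1 - u * α) + (1 - u) / (1 - u * α))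
      with hF
    have huIcc : Set.uIcc (-1:ℝ) 1 = Set.Icc (-1) 1 := Set.uIcc_of_le (by norm_num)
    have hderiv : ∀ α ∈ Set.uIcc (-1:ℝ) 1,
        HasDerivAt F ((1 - α) / (1 - u * α) ^ 2) α := by
      intro α hα
      rw [huIcc] at hα
      have hp := hpos α hα
      have h1 : HasDerivAt (fun α : ℝ => 1 - u * α) (-u) α := by
        simpa using ((hasDerivAt_id α).const_mul u).const_sub 1
      have hlog : HasDerivAt (fun α : ℝ => Real.log (1 - u * α)) (-u / (1 - u * α)) α :=
        h1.log hp.ne'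
      have hdivd : HasDerivAt (fun α : ℝ => (1 - u) / (1 - u * α))
          ((0 * (1 - u * α) - (1 - u) * (-u)) / (1 - u * α) ^ 2) α :=
        (hasDerivAt_const α (1 - u)).div h1 hp.ne'
      have := (hlog.add hdivd).const_mul (-(1 / u ^ 2))
      refine this.congr_deriv ?_
      field_simp
      ring
    have hcont : IntervalIntegrable (fun α => (1 - α) / (1 - u * α) ^ 2)
        MeasureTheory.volume (-1) 1 := by
      apply ContinuousOn.intervalIntegrable
      rw [huIcc]
      apply ContinuousOn.div
      · fun_prop
      · fun_prop
      · intro α hα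
        exact pow_ne_zero 2 (hpos α hα).ne'
    have key := intervalIntegral.integral_eq_sub_of_hasDerivAt hderiv hcont
    rw [key]
    have e1 : (1:ℝ) - u * 1 = 1 - u := by ring
    have e2 : (1:ℝ) - u * (-1) = 1 + u := by ring
    simp only [hF, e1, e2]
    rw [Real.log_div h1u'.ne' h1u.ne']
    have hu2 : u ^ 2 ≠ 0 := pow_ne_zero 2 hu0.ne'
    field_simp
    ring
  · -- the inequality
    rw [div_le_iff₀ (by positivity)]
    have ha := aux_log1 u hu0.le
    have hb := aux_log2 u ⟨hu0.le, hu1⟩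
    rw [Real.log_div h1u'.ne' h1u.ne']
    nlinarith [mul_le_mul_of_nonneg_left ha h1u'.le,
      mul_le_mul_of_nonneg_left hb h1u'.le,
      mul_pos hu0 hu0, mul_pos (mul_pos hu0 hu0) hu0, pow_pos hu0 3, pow_pos hu0 4]
end
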